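/- Let k ≥ 2, N ≥ 1, and a, b, c ≥ 1. In the l-layer Mycielskian graph M_k^{(l)}(a,b,c) with l = N, every subgraph with chromatic number k+1 contains at least N + 2 vertices. Consequently, M_k^{(N)}(a,b,c) contains no copy of any graph H with χ(H) = k+1 on at most N vertices. -/

import Mathlib

open SimpleGraph

/-- `H` has a copy in `G` (an injective graph homomorphism). -/
def Contains {α β : Type*} (H : SimpleGraph α) (G : SimpleGraph β) : Prop :=
  ∃ f : H →g G, Function.Injective f

/-- The `l`-layer Mycielskian graph `M_k^{(l)}(a,b,c)`: parts `V_1,…,V_k` of size `a`,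
parts `W_i^m` (`i ∈ [k]`, `m ∈ [l]`, here `m : Fin l`) of size `b`, and `U` of size `c`;
edges are `K[V_i,V_j]` (`i ≠ j`), `K[V_j,W_i^1]` (`i ≠ j`),
`K[W_i^m, W_j^{m+1}]` (`i ≠ j`), and `K[W_i^l, U]`. -/
def MycL (k l a b c : ℕ) :
    SimpleGraph ((Fin k × Fin a) ⊕ (Fin k × Fin l × Fin b) ⊕ Fin c) :=
  SimpleGraph.fromRel (fun x y =>
    match x, y with
    | Sum.inl v, Sum.inl w => v.1 ≠ w.1
    | Sum.inl v, Sum.inr (Sum.inl w) => v.1 ≠ w.1 ∧ (w.2.1 : ℕ) = 0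
    | Sum.inr (Sum.inl v), Sum.inr (Sum.inl w) => v.1 ≠ w.1 ∧ (w.2.1 : ℕ) = v.2.1 + 1
    | Sum.inr (Sum.inl v), Sum.inr (Sum.inr _) => (v.2.1 : ℕ) = l - 1
    | _, _ => False)

/-- The "level" of a vertex of `MycL`: `V` vertices have level `0`, `W_i^m` vertices have
level `m+1`, and `U` vertices have level `N+1`. -/
def mycLev (k N a b c : ℕ) : ((Fin k × Fin a) ⊕ (Fin k × Fin N × Fin b) ⊕ Fin c) → ℕ
  | Sum.inl _ => 0
  | Sum.inr (Sum.inl w) => (w.2.1 : ℕ) + 1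
  | Sum.inr (Sum.inr _) => N + 1

/-- The "first coordinate" of a non-`U` vertex of `MycL` (default `0` on `U`). -/
def mycFc (k N a b c : ℕ) (hk : 0 < k) :
    ((Fin k × Fin a) ⊕ (Fin k × Fin N × Fin b) ⊕ Fin c) → Fin k
  | Sum.inl v => v.1
  | Sum.inr (Sum.inl w) => w.1
  | Sum.inr (Sum.inr _) => ⟨0, hk⟩

lemma mycL_adj_lev {k N a b c : ℕ} {x y} (h : (MycL k N a b c).Adj x y) :
    mycLev k N a b c x + 1 = mycLev k N a b c y ∨
      mycLev k N a b c y + 1 = mycLev k N a b c x ∨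
      (mycLev k N a b c x = 0 ∧ mycLev k N a b c y = 0) := by
  rw [MycL, fromRel_adj] at h
  obtain ⟨-, h | h⟩ := h <;>
    rcases x with v | w | u <;> rcases y with v' | w' | u' <;>
      (try simp only [] at h) <;> simp only [mycLev] <;>
      first
        | exact h.elim
        | exact Or.inr (Or.inr ⟨by trivial, by trivial⟩)
        | (obtain ⟨-, h⟩ := h; omega)
        | (have hw := w.2.1.isLt; omega)
        | (have hw := w'.2.1.isLt; omega)
        | omega

lemma mycL_adj_fc {k N a b c : ℕ} (hk0 : 0 < k) {x y} (h : (MycL k N a b c).Adj x y) :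
    mycLev k N a b c x = N + 1 ∨ mycLev k N a b c y = N + 1 ∨
      mycFc k N a b c hk0 x ≠ mycFc k N a b c hk0 y := by
  rw [MycL, fromRel_adj] at h
  obtain ⟨-, h | h⟩ := h <;>
    rcases x with v | w | u <;> rcases y with v' | w' | u' <;>
      (try simp only [] at h) <;> simp only [mycLev, mycFc] <;>
      first
        | exact h.elim
        | (left; trivial)
        | (right; left; trivial)
        | (right; right; exact h)
        | (right; right; exact h.1)
        | (right; right; exact fun he => h (he.symm))
        | (right; right; exact fun he => h.1 (he.symm))

lemma mycL_part1 (k N a b c : ℕ) (hk : 2 ≤ k) (G' : (MycL k N a b c).Subgraph)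
    (hchi : G'.coe.chromaticNumber = (k + 1 : ℕ)) : N + 2 ≤ G'.verts.ncard := by
  have hk0 : 0 < k := by omega
  have key : ∀ t, t ≤ N + 1 → ∃ x ∈ G'.verts, mycLev k N a b c x = t := by
    intro t ht
    by_contra hno
    push_neg at hno
    have hcol : G'.coe.Colorable k := by
      refine ⟨SimpleGraph.Coloring.mk
        (fun v => if mycLev k N a b c v.1 < t then mycFc k N a b c hk0 v.1
          else ⟨mycLev k N a b c v.1 % 2, lt_of_lt_of_le (Nat.mod_lt _ (by omega)) hk⟩) ?_⟩
      rintro ⟨x, hx⟩ ⟨y, hy⟩ hadj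
      simp only [Subgraph.coe_adj] at hadj
      have hA := G'.adj_sub hadj
      have hlev := mycL_adj_lev hA
      have hfc := mycL_adj_fc hk0 hA
      have hxt := hno x hx
      have hyt := hno y hy
      by_cases h1 : mycLev k N a b c x < t <;> by_cases h2 : mycLev k N a b c y < t <;>
        simp only [h1, h2, if_true, if_false, ne_eq]
      · rcases hfc with h | h | h
        · exfalso; omega
        · exfalso; omega
        · exact h
      · exfalso; omega
      · exfalso; omega
      · intro he
        have : mycLev k N a b c x % 2 = mycLev k N a b c y % 2 := by
          simpa using congrArg Fin.val he
        omega
    have hle := hcol.chromaticNumber_le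
    rw [hchi] at hle
    have : (k + 1 : ℕ) ≤ k := by exact_mod_cast hle
    omega
  have hx : ∀ t : Fin (N + 2), ∃ x ∈ G'.verts, mycLev k N a b c x = t :=
    fun t => key t (by omega)
  choose g hg1 hg2 using hx
  have hinj : Function.Injective (fun t : Fin (N + 2) => (⟨g t, hg1 t⟩ : G'.verts)) := by
    intro s t h
    have h' : g s = g t := congrArg Subtype.val h
    have : (s : ℕ) = t := by rw [← hg2 s, ← hg2 t, h']
    exact Fin.ext this
  have h2 : Nat.card (Fin (N + 2)) ≤ Nat.card G'.verts :=
    Nat.card_le_card_of_injective _ hinj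
  simpa [Nat.card_coe_set_eq] using h2

theorem stmt9 (k N a b c : ℕ) (hk : 2 ≤ k) (hN : 1 ≤ N)
    (ha : 1 ≤ a) (hb : 1 ≤ b) (hc : 1 ≤ c) :
    (∀ G' : (MycL k N a b c).Subgraph,
      G'.coe.chromaticNumber = (k + 1 : ℕ) → N + 2 ≤ G'.verts.ncard) ∧
    (∀ (m : ℕ) (H : SimpleGraph (Fin m)), m ≤ N →
      H.chromaticNumber = (k + 1 : ℕ) → ¬ Contains H (MycL k N a b c)) := by
  constructor
  · exact fun G' h => mycL_part1 k N a b c hk G' h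
  · rintro m H hm hH ⟨f, hf⟩
    set G' : (MycL k N a b c).Subgraph := SimpleGraph.Subgraph.map f ⊤ with hG'
    have hvsub : G'.verts = Set.range f := by
      simp [hG', SimpleGraph.Subgraph.map]
    let e : Fin m ≃ G'.verts :=
      (Equiv.ofInjective f hf).trans (Equiv.setCongr hvsub.symm)
    have heval : ∀ a : Fin m, ((e a : G'.verts) : _) = f a := fun a => rfl
    have hiso : H ≃g G'.coe := by
      refine ⟨e, ?_⟩
      intro u v
      rw [Subgraph.coe_adj, heval, heval]
      constructor
      · rintro ⟨p, q, hpq, hp, hq⟩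
        rw [hf hp, hf hq] at hpq
        simpa using hpq
      · intro h
        exact ⟨u, v, by simpa using h, rfl, rfl⟩
    have hchi : G'.coe.chromaticNumber = (k + 1 : ℕ) := by
      have h1 := chromaticNumber_mono_of_hom hiso.toHom
      have h2 := chromaticNumber_mono_of_hom hiso.symm.toHom
      rw [hH] at h1 h2
      exact le_antisymm h2 h1
    have hbig := mycL_part1 k N a b c hk G' hchi
    have hcard : G'.verts.ncard = m := by
      rw [hvsub, ← Nat.card_coe_set_eq]
      rw [Nat.card_congr (Equiv.ofInjective f hf).symm]
      simp
    omega
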